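/- arXiv:1711.00757 — 4 statements merged into one kernel-verified Lean document; each statement's English description precedes it below -/
import Mathlib

section
/- Let k ≥ 1, λ_i > 0, θ_i > 0, B > 0. The minimum of ∑_{i=1}^k λ_i/ε_i² over ε_i > 0, p_i ∈ ℝ subject to ∑ λ_i p_i ≤ B and p_i − θ_i ε_i ≥ 0 is attained at ε_i* = (B/∑_j λ_j θ_j^{2/3})·θ_i^{−1/3} and p_i* = θ_i ε_i*. -/
open Finset

lemma tangent_aux {c x L : ℝ} (hc : 0 < c) (hx : 0 < x) (hL : 0 ≤ L) :
    3 * (L / c ^ 2) - 2 * L * x / c ^ 3 ≤ L / x ^ 2 := by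
  have h1 : 3 * (L / c ^ 2) - 2 * L * x / c ^ 3 = (L * (3 * c - 2 * x)) / c ^ 3 := by
    field_simp
  rw [h1, div_le_div_iff₀ (by positivity) (by positivity)]
  nlinarith [mul_nonneg hL (mul_nonneg (sq_nonneg (c - x)) (by linarith : (0:ℝ) ≤ c + 2 * x))]

/-- Complete-information optimal contract (Theorem 4.2): the minimum of
    ∑ λ_i/ε_i² under budget ∑ λ_i p_i ≤ B and IR p_i ≥ θ_i ε_i is attained at
    ε_i* = (B/∑_j λ_j θ_j^{2/3})·θ_i^{−1/3}, p_i* = θ_i ε_i*. -/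
theorem complete_info_optimal_contract
    (k : ℕ) (hk : 1 ≤ k) (lam θ : Fin k → ℝ)
    (hlam : ∀ i, 0 < lam i) (hθ : ∀ i, 0 < θ i) (B : ℝ) (hB : 0 < B) :
    let εstar : Fin k → ℝ := fun i =>
      (B / ∑ j, lam j * (θ j) ^ ((2 : ℝ) / 3)) * (θ i) ^ (-(1 : ℝ) / 3)
    let pstar : Fin k → ℝ := fun i => θ i * εstar i
    ((∀ i, 0 < εstar i) ∧ (∑ i, lam i * pstar i ≤ B) ∧
      (∀ i, 0 ≤ pstar i - θ i * εstar i)) ∧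
    ∀ ε p : Fin k → ℝ, (∀ i, 0 < ε i) → (∑ i, lam i * p i ≤ B) →
      (∀ i, 0 ≤ p i - θ i * ε i) →
      ∑ i, lam i / (εstar i) ^ 2 ≤ ∑ i, lam i / (ε i) ^ 2 := by
  intro εstar pstar
  have hne : Nonempty (Fin k) := ⟨⟨0, hk⟩⟩
  set S : ℝ := ∑ j, lam j * (θ j) ^ ((2 : ℝ) / 3) with hSdef
  have hS : 0 < S := Finset.sum_pos
    (fun i _ => mul_pos (hlam i) (Real.rpow_pos_of_pos (hθ i) _)) Finset.univ_nonempty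
  set C : ℝ := B / S with hCdef
  have hC : 0 < C := div_pos hB hS
  have hεs : ∀ i, εstar i = C * (θ i) ^ (-(1 : ℝ) / 3) := fun i => rfl
  have hps : ∀ i, pstar i = θ i * εstar i := fun i => rfl
  -- rpow facts
  have hmul : ∀ i, θ i * θ i ^ (-(1:ℝ)/3) = θ i ^ ((2:ℝ)/3) := by
    intro i
    rw [show ((2:ℝ)/3) = 1 + (-(1:ℝ)/3) by norm_num, Real.rpow_add (hθ i), Real.rpow_one]
  have hsq : ∀ i, θ i ^ ((2:ℝ)/3) * (θ i ^ (-(1:ℝ)/3)) ^ 2 = 1 := by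
    intro i
    rw [← Real.rpow_natCast (θ i ^ (-(1:ℝ)/3)) 2, ← Real.rpow_mul (hθ i).le,
        ← Real.rpow_add (hθ i)]
    norm_num
  have hcu : ∀ i, (θ i ^ (-(1:ℝ)/3)) ^ 3 = (θ i)⁻¹ := by
    intro i
    rw [← Real.rpow_natCast (θ i ^ (-(1:ℝ)/3)) 3, ← Real.rpow_mul (hθ i).le]
    norm_num [Real.rpow_neg_one]
  have hεpos : ∀ i, 0 < εstar i := fun i => by
    rw [hεs i]; exact mul_pos hC (Real.rpow_pos_of_pos (hθ i) _)
  -- term identity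
  have hterm : ∀ i, lam i / εstar i ^ 2 = lam i * θ i ^ ((2:ℝ)/3) / C ^ 2 := by
    intro i
    rw [hεs i, mul_pow, div_eq_div_iff
      (mul_pos (pow_pos hC 2) (pow_pos (Real.rpow_pos_of_pos (hθ i) _) 2)).ne'
      (pow_pos hC 2).ne']
    linear_combination (-(lam i * C ^ 2)) * hsq i
  have hθc3 : ∀ i, θ i * εstar i ^ 3 = C ^ 3 := by
    intro i
    rw [hεs i, mul_pow, hcu i, mul_comm (C ^ 3), ← mul_assoc,
      mul_inv_cancel₀ (hθ i).ne', one_mul]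
  -- budget identity
  have hbudeq : ∑ i, lam i * pstar i = B := by
    have : ∀ i ∈ Finset.univ, lam i * pstar i = C * (lam i * θ i ^ ((2:ℝ)/3)) := by
      intro i _
      rw [hps i, hεs i, ← hmul i]; ring
    rw [Finset.sum_congr rfl this, ← Finset.mul_sum, ← hSdef, hCdef,
        div_mul_cancel₀ B hS.ne']
  have hCS : C * S = B := by rw [hCdef, div_mul_cancel₀ B hS.ne']
  refine ⟨⟨hεpos, le_of_eq hbudeq, fun i => by rw [hps i]; simp⟩, ?_⟩
  intro ε p hε hbud hIR
  -- pointwise bound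
  have hpt : ∀ i ∈ Finset.univ,
      3 * (lam i * θ i ^ ((2:ℝ)/3) / C ^ 2) - 2 * (lam i * p i) / C ^ 3
        ≤ lam i / ε i ^ 2 := by
    intro i _
    have hIRi : θ i * ε i ≤ p i := by have := hIR i; linarith
    have t := tangent_aux (hεpos i) (hε i) (hlam i).le
    have hstep : 2 * lam i * ε i / εstar i ^ 3 = 2 * lam i * (θ i * ε i) / C ^ 3 := by
      rw [← hθc3 i]
      rw [div_eq_div_iff (pow_pos (hεpos i) 3).ne'
        (mul_pos (hθ i) (pow_pos (hεpos i) 3)).ne']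
      ring
    have hle : 2 * lam i * (θ i * ε i) / C ^ 3 ≤ 2 * (lam i * p i) / C ^ 3 := by
      apply div_le_div_of_nonneg_right ?_ (pow_pos hC 3).le
      nlinarith [hlam i]
    have ht2 := hterm i
    linarith [t]
  have hsum := Finset.sum_le_sum hpt
  -- compute the lower-bound sum
  have hsplit : ∑ i, (3 * (lam i * θ i ^ ((2:ℝ)/3) / C ^ 2) - 2 * (lam i * p i) / C ^ 3)
      = 3 * (S / C ^ 2) - 2 * (∑ i, lam i * p i) / C ^ 3 := by
    rw [Finset.sum_sub_distrib]
    congr 1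
    · rw [← Finset.mul_sum, ← Finset.sum_div, ← hSdef]
    · rw [← Finset.sum_div, ← Finset.mul_sum]
  have hstar : ∑ i, lam i / εstar i ^ 2 = S / C ^ 2 := by
    rw [Finset.sum_congr rfl (fun i _ => hterm i), ← Finset.sum_div, ← hSdef]
  have hBC : B / C ^ 3 = S / C ^ 2 := by
    rw [← hCS]
    field_simp
  have hb2 : 2 * (∑ i, lam i * p i) / C ^ 3 ≤ 2 * (S / C ^ 2) := by
    have : 2 * (∑ i, lam i * p i) / C ^ 3 ≤ 2 * B / C ^ 3 := by
      apply div_le_div_of_nonneg_right ?_ (pow_pos hC 3).le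
      linarith
    calc 2 * (∑ i, lam i * p i) / C ^ 3 ≤ 2 * B / C ^ 3 := this
      _ = 2 * (B / C ^ 3) := by ring
      _ = 2 * (S / C ^ 2) := by rw [hBC]
  rw [hstar]
  calc S / C ^ 2 = 3 * (S / C ^ 2) - 2 * (S / C ^ 2) := by ring
    _ ≤ 3 * (S / C ^ 2) - 2 * (∑ i, lam i * p i) / C ^ 3 := by linarith
    _ = ∑ i, (3 * (lam i * θ i ^ ((2:ℝ)/3) / C ^ 2) - 2 * (lam i * p i) / C ^ 3) := hsplit.symm
    _ ≤ ∑ i, lam i / ε i ^ 2 := hsum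
end

section
/- Let ε: [θ̲, θ̄] → ℝ be non-increasing and p: [θ̲, θ̄] → ℝ differentiable with p'(θ) = θ·ε'(θ) for all θ (ε differentiable). Then for all θ, θ̂ ∈ [θ̲, θ̄]: p(θ) − θ·ε(θ) ≥ p(θ̂) − θ·ε(θ̂). -/
open Set

lemma deriv_nonpos_of_antitoneOn {a b : ℝ} {ε : ℝ → ℝ}
    (hεdiff : Differentiable ℝ ε) (hεmono : AntitoneOn ε (Set.Icc a b))
    {u : ℝ} (hu : u ∈ Set.Ioo a b) : deriv ε u ≤ 0 := by
  have h := (hεdiff u).hasDerivAt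
  rw [hasDerivAt_iff_tendsto_slope] at h
  refine le_of_tendsto h ?_
  have hmem : Set.Ioo a b ∈ nhdsWithin u {u}ᶜ :=
    nhdsWithin_le_nhds (isOpen_Ioo.mem_nhds hu)
  filter_upwards [hmem, self_mem_nhdsWithin] with x hx hxu
  have hxu' : x ≠ u := hxu
  rcases lt_or_gt_of_ne hxu' with hlt | hgt
  · have : ε u ≤ ε x := hεmono (Set.mem_Icc_of_Ioo hx) (Set.mem_Icc_of_Ioo hu) hlt.le
    have hnum : 0 ≤ ε x - ε u := by linarith
    have hden : x - u < 0 := by linarith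
    rw [slope_def_field]
    exact div_nonpos_of_nonneg_of_nonpos hnum hden.le
  · have : ε x ≤ ε u := hεmono (Set.mem_Icc_of_Ioo hu) (Set.mem_Icc_of_Ioo hx) hgt.le
    have hnum : ε x - ε u ≤ 0 := by linarith
    have hden : 0 < x - u := by linarith
    rw [slope_def_field]
    exact div_nonpos_of_nonpos_of_nonneg hnum hden.le

/-- Continuous-type IC sufficiency: if ε is non-increasing on [θ̲, θ̄] and
    p' (θ) = θ·ε'(θ) there, then global incentive compatibility holds:
    p(θ) − θ·ε(θ) ≥ p(θ̂) − θ·ε(θ̂) for all θ, θ̂ in the interval. -/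
theorem continuous_IC_sufficiency
    (a b : ℝ) (hab : a ≤ b) (ε p : ℝ → ℝ)
    (hεdiff : Differentiable ℝ ε) (hpdiff : Differentiable ℝ p)
    (hεmono : AntitoneOn ε (Set.Icc a b))
    (hfo : ∀ θ ∈ Set.Icc a b, deriv p θ = θ * deriv ε θ) :
    ∀ θ ∈ Set.Icc a b, ∀ θ' ∈ Set.Icc a b,
      p θ' - θ * ε θ' ≤ p θ - θ * ε θ := by
  intro θ hθ θ' hθ'
  set g : ℝ → ℝ := fun u => p u - θ * ε u with hg
  have hgdiff : Differentiable ℝ g := hpdiff.sub (hεdiff.const_mul θ)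
  have hderiv : ∀ u ∈ Set.Icc a b, deriv g u = (u - θ) * deriv ε u := by
    intro u hu
    have : deriv g u = deriv p u - θ * deriv ε u := by
      rw [hg]
      rw [deriv_fun_sub (hpdiff u) ((hεdiff.const_mul θ) u), deriv_const_mul θ (hεdiff u)]
    rw [this, hfo u hu]; ring
  suffices h : g θ' ≤ g θ by simpa [hg] using h
  rcases le_total θ' θ with hle | hle
  · have hmono : MonotoneOn g (Set.Icc θ' θ) := by
      apply monotoneOn_of_deriv_nonneg (convex_Icc θ' θ)
        hgdiff.continuous.continuousOn hgdiff.differentiableOn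
      intro x hx
      rw [interior_Icc] at hx
      have hxab : x ∈ Set.Ioo a b := ⟨lt_of_le_of_lt hθ'.1 hx.1, lt_of_lt_of_le hx.2 hθ.2⟩
      rw [hderiv x (Set.mem_Icc_of_Ioo hxab)]
      exact mul_nonneg_of_nonpos_of_nonpos (by linarith [hx.2]) (deriv_nonpos_of_antitoneOn hεdiff hεmono hxab)
    exact hmono (Set.left_mem_Icc.mpr hle) (Set.right_mem_Icc.mpr hle) hle
  · have hmono : AntitoneOn g (Set.Icc θ θ') := by
      apply antitoneOn_of_deriv_nonpos (convex_Icc θ θ')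
        hgdiff.continuous.continuousOn hgdiff.differentiableOn
      intro x hx
      rw [interior_Icc] at hx
      have hxab : x ∈ Set.Ioo a b := ⟨lt_of_le_of_lt hθ.1 hx.1, lt_of_lt_of_le hx.2 hθ'.2⟩
      rw [hderiv x (Set.mem_Icc_of_Ioo hxab)]
      exact mul_nonpos_of_nonneg_of_nonpos (by linarith [hx.1])
        (deriv_nonpos_of_antitoneOn hεdiff hεmono hxab)
    exact hmono (Set.left_mem_Icc.mpr hle) (Set.right_mem_Icc.mpr hle) hle
end

section
/- If the global continuous-type IC holds, i.e., p(θ) − θε(θ) ≥ p(θ̂) − θε(θ̂) for all θ, θ̂ ∈ [θ̲, θ̄], with ε and p differentiable, then ε is non-increasing and p'(θ) = θ·ε'(θ) for all interior θ. -/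
open Set

/-- Continuous-type IC necessity: if global incentive compatibility holds on
    [θ̲, θ̄] with ε and p differentiable, then ε is non-increasing on the
    interval and p'(θ) = θ·ε'(θ) at every interior point. -/
theorem continuous_IC_necessity
    (a b : ℝ) (hab : a ≤ b) (ε p : ℝ → ℝ)
    (hεdiff : Differentiable ℝ ε) (hpdiff : Differentiable ℝ p)
    (hIC : ∀ θ ∈ Set.Icc a b, ∀ θ' ∈ Set.Icc a b,
      p θ' - θ * ε θ' ≤ p θ - θ * ε θ) :
    AntitoneOn ε (Set.Icc a b) ∧
    ∀ θ ∈ Set.Ioo a b, deriv p θ = θ * deriv ε θ := by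
  constructor
  · intro x hx y hy hxy
    rcases hxy.eq_or_lt with rfl | hlt
    · exact le_refl _
    · have h1 := hIC x hx y hy
      have h2 := hIC y hy x hx
      nlinarith
  · intro θ hθ
    have hmax : IsLocalMax (fun x => p x - θ * ε x) θ := by
      filter_upwards [Ioo_mem_nhds hθ.1 hθ.2] with x hx
      exact hIC θ (Ioo_subset_Icc_self hθ) x (Ioo_subset_Icc_self hx)
    have hd : deriv (fun x => p x - θ * ε x) θ = 0 := hmax.deriv_eq_zero
    have := deriv_fun_sub (hpdiff θ) ((hεdiff θ).const_mul θ)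
    simp only [deriv_const_mul_field] at this
    rw [this] at hd
    linarith
end

section
/- In the discrete incomplete-information optimal contract, type-i's equilibrium utility is u_i* = p_i* − θ_i ε_i* = G·∑_{j=i+1}^k (θ_j − θ_{j−1}) H_j^{−1/3} λ_j^{1/3} (empty sum for i = k), which is nonnegative and non-increasing in i. -/
open Finset

/-- Equilibrium utilities in the discrete incomplete-information optimal
    contract: u_i* = p_i* − θ_i ε_i* = G·∑_{j=i+1}^k (θ_j − θ_{j−1})
    H_j^{−1/3} λ_j^{1/3}, which is nonnegative, non-increasing in i, and zero
    for the highest type. -/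
theorem incomplete_info_equilibrium_utilities
    (k : ℕ) (hk : 1 ≤ k) (lam θ : ℕ → ℝ)
    (hlam : ∀ i ∈ Finset.Icc 1 k, 0 < lam i)
    (hθ1 : 0 < θ 1)
    (hθmono : ∀ i j, 1 ≤ i → i ≤ j → j ≤ k → θ i ≤ θ j)
    (B : ℝ) (hB : 0 < B)
    (H : ℕ → ℝ)
    (hH : ∀ i ∈ Finset.Icc 1 k,
      H i = lam i * θ i + (θ i - θ (i - 1)) * ∑ j ∈ Finset.Icc 1 (i - 1), lam j) :
    let G : ℝ := B / ∑ j ∈ Finset.Icc 1 k, (H j) ^ ((2 : ℝ) / 3) * (lam j) ^ ((1 : ℝ) / 3)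
    let εstar : ℕ → ℝ := fun i => G * (H i) ^ (-(1 : ℝ) / 3) * (lam i) ^ ((1 : ℝ) / 3)
    let pstar : ℕ → ℝ := fun i =>
      θ i * εstar i + ∑ j ∈ Finset.Icc (i + 1) k, (θ j - θ (j - 1)) * εstar j
    let u : ℕ → ℝ := fun i =>
      G * ∑ j ∈ Finset.Icc (i + 1) k,
        (θ j - θ (j - 1)) * (H j) ^ (-(1 : ℝ) / 3) * (lam j) ^ ((1 : ℝ) / 3)
    (∀ i ∈ Finset.Icc 1 k, pstar i - θ i * εstar i = u i) ∧
    (∀ i ∈ Finset.Icc 1 k, 0 ≤ u i) ∧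
    (∀ i ∈ Finset.Icc 1 k, ∀ j ∈ Finset.Icc 1 k, i ≤ j → u j ≤ u i) ∧
    u k = 0 := by
  intro G εstar pstar u
  have hθpos : ∀ j ∈ Finset.Icc 1 k, 0 < θ j := fun j hj =>
    lt_of_lt_of_le hθ1 (hθmono 1 j le_rfl (Finset.mem_Icc.mp hj).1 (Finset.mem_Icc.mp hj).2)
  have hHpos : ∀ j ∈ Finset.Icc 1 k, 0 < H j := by
    intro j hj
    obtain ⟨h1, h2⟩ := Finset.mem_Icc.mp hj
    rw [hH j hj]
    have h3 : 0 < lam j * θ j := mul_pos (hlam j hj) (hθpos j hj)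
    have h4 : 0 ≤ (θ j - θ (j - 1)) * ∑ i ∈ Finset.Icc 1 (j - 1), lam i := by
      rcases eq_or_lt_of_le h1 with h | h
      · simp [← h]
      · have hj2 : 2 ≤ j := h
        have : θ (j - 1) ≤ θ j := hθmono (j - 1) j (by omega) (by omega) h2
        have hs : 0 ≤ ∑ i ∈ Finset.Icc 1 (j - 1), lam i :=
          Finset.sum_nonneg fun i hi => by
            have hi' := Finset.mem_Icc.mp hi
            exact (hlam i (Finset.mem_Icc.mpr ⟨hi'.1, by omega⟩)).le
        exact mul_nonneg (by linarith) hs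
    linarith
  have hGpos : 0 < G := by
    apply div_pos hB
    apply Finset.sum_pos
    · intro j hj
      exact mul_pos (Real.rpow_pos_of_pos (hHpos j hj) _)
        (Real.rpow_pos_of_pos (hlam j hj) _)
    · exact ⟨1, Finset.mem_Icc.mpr ⟨le_rfl, hk⟩⟩
  have hterm : ∀ i, 1 ≤ i → ∀ j ∈ Finset.Icc (i + 1) k,
      0 ≤ (θ j - θ (j - 1)) * (H j) ^ (-(1 : ℝ) / 3) * (lam j) ^ ((1 : ℝ) / 3) := by
    intro i hi j hj
    obtain ⟨h1, h2⟩ := Finset.mem_Icc.mp hj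
    have hjIcc : j ∈ Finset.Icc 1 k := Finset.mem_Icc.mpr ⟨by omega, h2⟩
    have : θ (j - 1) ≤ θ j := hθmono (j - 1) j (by omega) (by omega) h2
    exact mul_nonneg (mul_nonneg (by linarith)
      (Real.rpow_pos_of_pos (hHpos j hjIcc) _).le)
      (Real.rpow_pos_of_pos (hlam j hjIcc) _).le
  refine ⟨?_, ?_, ?_, ?_⟩
  · intro i hi
    show θ i * εstar i + _ - θ i * εstar i = _
    rw [add_sub_cancel_left]
    show _ = G * _
    rw [Finset.mul_sum]
    exact Finset.sum_congr rfl fun j _ => by show _ * (G * _ * _) = _; ring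
  · intro i hi
    exact mul_nonneg hGpos.le
      (Finset.sum_nonneg (hterm i (Finset.mem_Icc.mp hi).1))
  · intro i hi j hj hij
    apply mul_le_mul_of_nonneg_left _ hGpos.le
    apply Finset.sum_le_sum_of_subset_of_nonneg
    · exact Finset.Icc_subset_Icc_left (by omega)
    · intro m hm _
      exact hterm i (Finset.mem_Icc.mp hi).1 m hm
  · show G * _ = 0
    rw [Finset.Icc_eq_empty (by omega), Finset.sum_empty, mul_zero]
end
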